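/- Suppose sequences (aᵢ), (bᵢ) of nonnegative reals satisfy a₁ ≥ L/4, b_i ≥ (∑_{j=1}^{i} a_j) − c and a_{i+1} ≥ (∑_{j=1}^{i} b_j) − c for all i ≥ 1, where 0 ≤ c ≤ L/100. Then for all i ≥ 1, b_i ≥ f(i)·L/3 and a_i ≥ (f(i) − 1/8)·L/3, where f(i) = 2^{i-4} + 1/2. Consequently, if additionally ∑_j a_j + ∑_j b_j ≤ n and L ≥ 1, the recursion can run for at most log₂ n + 4 steps. -/

import Mathlib

/-- `f i = 2^{i-4} + 1/2` as a real number. -/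
noncomputable def augGrowthR (i : ℕ) : ℝ := 2 ^ ((i : ℤ) - 4) + 1 / 2

/-- Growth of the reachable sets in the augmentation algorithm: if
`a₁ ≥ L/4`, `bᵢ ≥ (∑_{j≤i} aⱼ) − c` and `aᵢ₊₁ ≥ (∑_{j≤i} bⱼ) − c` with
`0 ≤ c ≤ L/100`, then `bᵢ ≥ f(i)·L/3` and `aᵢ ≥ (f(i) − 1/8)·L/3` for all
`i ≥ 1`; consequently if `∑_{j≤i} aⱼ + ∑_{j≤i} bⱼ ≤ n` and `L ≥ 1` then
`i ≤ log₂ n + 4`. -/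
theorem augmentation_growth
    (a b : ℕ → ℝ) (L c : ℝ) (hL : 0 < L) (hc0 : 0 ≤ c) (hcL : c ≤ L / 100)
    (ha0 : ∀ i, 0 ≤ a i) (hb0 : ∀ i, 0 ≤ b i)
    (ha1 : L / 4 ≤ a 1)
    (hb : ∀ i, 1 ≤ i → (∑ j ∈ Finset.Icc 1 i, a j) - c ≤ b i)
    (ha : ∀ i, 1 ≤ i → (∑ j ∈ Finset.Icc 1 i, b j) - c ≤ a (i + 1)) :
    (∀ i, 1 ≤ i →
      augGrowthR i * L / 3 ≤ b i ∧ (augGrowthR i - 1 / 8) * L / 3 ≤ a i) ∧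
    (∀ (i : ℕ) (n : ℝ), 1 ≤ i → 1 ≤ L →
      (∑ j ∈ Finset.Icc 1 i, a j) + (∑ j ∈ Finset.Icc 1 i, b j) ≤ n →
      (i : ℝ) ≤ Real.logb 2 n + 4) := by
  have h2 : (0:ℝ) < 2 := two_pos
  -- key invariant on partial sums
  have key : ∀ i : ℕ, 1 ≤ i →
      (2 ^ ((i:ℤ) - 4) + 1/2) * (L/3) + c ≤ ∑ j ∈ Finset.Icc 1 i, a j ∧
      (2 ^ ((i:ℤ) - 3) + 3/8) * (L/3) + c ≤ ∑ j ∈ Finset.Icc 1 i, b j := by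
    intro i hi
    induction i, hi using Nat.le_induction with
    | base =>
      have hb1 := hb 1 le_rfl
      simp only [Finset.Icc_self, Finset.sum_singleton] at hb1 ⊢
      have e1 : ((1:ℕ):ℤ) - 4 = -3 := by norm_num
      have e2 : ((1:ℕ):ℤ) - 3 = -2 := by norm_num
      rw [e1, e2]
      have v1 : (2:ℝ) ^ (-3:ℤ) = 1/8 := by norm_num
      have v2 : (2:ℝ) ^ (-2:ℤ) = 1/4 := by norm_num
      rw [v1, v2]
      constructor <;> linarith
    | succ i hi ih =>
      obtain ⟨iha, ihb⟩ := ih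
      have hsa : (∑ j ∈ Finset.Icc 1 (i+1), a j)
          = (∑ j ∈ Finset.Icc 1 i, a j) + a (i+1) :=
        Finset.sum_Icc_succ_top (by omega) _
      have hsb : (∑ j ∈ Finset.Icc 1 (i+1), b j)
          = (∑ j ∈ Finset.Icc 1 i, b j) + b (i+1) :=
        Finset.sum_Icc_succ_top (by omega) _
      have hai := ha i hi
      have hbi := hb (i+1) (by omega)
      rw [hsa] at hbi
      have hz4 : (0:ℝ) < 2 ^ ((i:ℤ) - 4) := zpow_pos h2 _
      have e1 : ((i+1:ℕ):ℤ) - 4 = (i:ℤ) - 3 := by push_cast; ring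
      have e2 : ((i+1:ℕ):ℤ) - 3 = (i:ℤ) - 2 := by push_cast; ring
      have d1 : (2:ℝ) ^ ((i:ℤ) - 3) = 2 * 2 ^ ((i:ℤ) - 4) := by
        rw [show (i:ℤ) - 3 = ((i:ℤ) - 4) + 1 by ring, zpow_add_one₀ two_ne_zero]
        ring
      have d2 : (2:ℝ) ^ ((i:ℤ) - 2) = 2 * 2 ^ ((i:ℤ) - 3) := by
        rw [show (i:ℤ) - 2 = ((i:ℤ) - 3) + 1 by ring, zpow_add_one₀ two_ne_zero]
        ring
      rw [hsa, hsb, e1, e2]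
      have hSa1 : (2 ^ ((i:ℤ) - 3) + 1/2) * (L/3) + c
          ≤ (∑ j ∈ Finset.Icc 1 i, a j) + a (i+1) := by
        nlinarith [hz4]
      refine ⟨hSa1, ?_⟩
      nlinarith [hz4]
  constructor
  · intro i hi
    obtain ⟨kai, kbi⟩ := key i hi
    constructor
    · have hbi := hb i hi
      have e : augGrowthR i * L / 3 = (2 ^ ((i:ℤ) - 4) + 1/2) * (L/3) := by
        rw [augGrowthR]; ring
      linarith
    · obtain ⟨k, rfl⟩ : ∃ k, i = k + 1 := ⟨i - 1, by omega⟩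
      rcases Nat.eq_zero_or_pos k with rfl | hk
      · have e : augGrowthR 1 = 2 ^ (-3:ℤ) + 1/2 := by
          rw [augGrowthR]; norm_num
        have v1 : (2:ℝ) ^ (-3:ℤ) = 1/8 := by norm_num
        rw [e, v1]
        nlinarith
      · obtain ⟨_, kbk⟩ := key k hk
        have hak := ha k hk
        have e : (augGrowthR (k+1) - 1/8) * L / 3 = (2 ^ ((k:ℤ) - 3) + 3/8) * (L/3) := by
          rw [augGrowthR]
          rw [show ((k+1:ℕ):ℤ) - 4 = (k:ℤ) - 3 by push_cast; ring]
          ring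
        linarith
  · intro i n hi hL1 hsum
    obtain ⟨kai, kbi⟩ := key i hi
    have hz4 : (0:ℝ) < 2 ^ ((i:ℤ) - 4) := zpow_pos h2 _
    have d1 : (2:ℝ) ^ ((i:ℤ) - 3) = 2 * 2 ^ ((i:ℤ) - 4) := by
      rw [show (i:ℤ) - 3 = ((i:ℤ) - 4) + 1 by ring, zpow_add_one₀ two_ne_zero]
      ring
    have hmul : 0 ≤ 2 ^ ((i:ℤ) - 4) * (L - 1) :=
      mul_nonneg hz4.le (by linarith)
    have hn : (2:ℝ) ^ ((i:ℤ) - 4) ≤ n := by nlinarith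
    have hrw : (2:ℝ) ^ ((i:ℝ) - 4) ≤ n := by
      rwa [show ((i:ℝ) - 4) = (((i:ℤ) - 4 : ℤ) : ℝ) by push_cast; ring,
        Real.rpow_intCast]
    have hlog : (i:ℝ) - 4 ≤ Real.logb 2 n :=
      (Real.le_logb_iff_rpow_le one_lt_two (lt_of_lt_of_le (by positivity) hrw)).mpr hrw
    linarith
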